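/- Let h > 0, let λ₁ ∈ ℂ \ {0}, let U_n(t), R_n(t), Q_n(t) be complex-valued functions, and let (f_n, g_n) be a solution of the associated Lax pair at λ = λ₁. Let Ω_n(t) be a complex-valued function, differentiable in t, satisfying Ω_{n+1} = −S_n Ω_n and Ω_n' = (i/2)(conj(λ₁)² − conj(λ₁)⁻² + |Q_n|² − |R_n|²) Ω_n for all n and t, where S_n := (1 + (i/2)h|U_n|²)/(1 − (i/2)h|U_n|²). Then the pair (−Ω_n conj(g_n), Ω_n conj(f_n)) is a solution of the Lax pair at λ = conj(λ₁). -/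

import Mathlib

open Complex ComplexConjugate

noncomputable section

/-- The factor `S = (1 + (i/2) h |u|^2)/(1 - (i/2) h |u|^2)`. -/
def mtmS (h : ℝ) (u : ℂ) : ℂ :=
  (1 + Complex.I / 2 * h * Complex.normSq u) / (1 - Complex.I / 2 * h * Complex.normSq u)

/-- `(U, R, Q)` solves the semi-discrete massive Thirring model with lattice spacing `h`. -/
def IsMTMSolution (h : ℝ) (U R Q : ℤ → ℝ → ℂ) : Prop :=
  (∀ (n : ℤ) (t : ℝ), DifferentiableAt ℝ (U n) t) ∧
  (∀ (n : ℤ) (t : ℝ),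
    4 * Complex.I * deriv (U n) t + Q (n + 1) t + Q n t
      + 2 * Complex.I / h * (R (n + 1) t - R n t)
      + (U n t) ^ 2 * (conj (R n t) + conj (R (n + 1) t))
      - U n t * ((Complex.normSq (Q (n + 1) t) : ℂ) + (Complex.normSq (Q n t) : ℂ)
          + (Complex.normSq (R (n + 1) t) : ℂ) + (Complex.normSq (R n t) : ℂ))
      - Complex.I * h / 2 * (U n t) ^ 2 * (conj (Q (n + 1) t) - conj (Q n t)) = 0) ∧
  (∀ (n : ℤ) (t : ℝ),
    -(2 * Complex.I / h) * (Q (n + 1) t - Q n t) + 2 * U n t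
      - (Complex.normSq (U n t) : ℂ) * (Q (n + 1) t + Q n t) = 0) ∧
  (∀ (n : ℤ) (t : ℝ),
    R (n + 1) t + R n t - 2 * U n t
      + Complex.I * h / 2 * (Complex.normSq (U n t) : ℂ) * (R (n + 1) t - R n t) = 0)

/-- `(f, g)` solves the Lax pair of the semi-discrete massive Thirring model with
potentials `(U, R, Q)`, lattice spacing `h`, at spectral value `lam`. -/
def IsLaxSolution (h : ℝ) (U R Q : ℤ → ℝ → ℂ) (lam : ℂ) (f g : ℤ → ℝ → ℂ) : Prop :=
  (∀ (n : ℤ) (t : ℝ), DifferentiableAt ℝ (f n) t) ∧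
  (∀ (n : ℤ) (t : ℝ), DifferentiableAt ℝ (g n) t) ∧
  (∀ (n : ℤ) (t : ℝ),
    f (n + 1) t = (lam + 2 * Complex.I / (h * lam) * mtmS h (U n t)) * f n t
      + 2 * U n t / (1 - Complex.I / 2 * h * Complex.normSq (U n t)) * g n t) ∧
  (∀ (n : ℤ) (t : ℝ),
    g (n + 1) t = 2 * conj (U n t) / (1 - Complex.I / 2 * h * Complex.normSq (U n t)) * f n t
      + (2 * Complex.I / (h * lam) - lam * mtmS h (U n t)) * g n t) ∧
  (∀ (n : ℤ) (t : ℝ),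
    deriv (f n) t = Complex.I / 2 * ((lam ^ 2 - (Complex.normSq (R n t) : ℂ)) * f n t
      + (lam * R n t - lam⁻¹ * Q n t) * g n t)) ∧
  (∀ (n : ℤ) (t : ℝ),
    deriv (g n) t = Complex.I / 2 * ((lam * conj (R n t) - lam⁻¹ * conj (Q n t)) * f n t
      + ((Complex.normSq (Q n t) : ℂ) - (lam ^ 2)⁻¹) * g n t))

/-- Symmetry of the Lax pair: from a solution at `lam1` one obtains a solution at `conj lam1`. -/

private lemma denom_ne (h : ℝ) (x : ℝ) :
    (1 : ℂ) - Complex.I / 2 * h * x ≠ 0 := by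
  intro H
  have := congrArg Complex.re H
  simp [Complex.div_re] at this

private lemma denom_ne' (h : ℝ) (x : ℝ) :
    (1 : ℂ) + Complex.I / 2 * h * x ≠ 0 := by
  intro H
  have := congrArg Complex.re H
  simp [Complex.div_re] at this

private lemma conj_deriv {g : ℝ → ℂ} {t : ℝ} (hg : DifferentiableAt ℝ g t) :
    deriv (fun s => (starRingEnd ℂ) (g s)) t = (starRingEnd ℂ) (deriv g t) :=
  (hg.hasDerivAt.star).deriv

private lemma conj_diff {g : ℝ → ℂ} {t : ℝ} (hg : DifferentiableAt ℝ g t) :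
    DifferentiableAt ℝ (fun s => (starRingEnd ℂ) (g s)) t :=
  hg.star

private lemma aux1 (A B e mu u F G W : ℂ) (hA : A ≠ 0) (hB : B ≠ 0) (he : e ≠ 0)
    (hmu : mu ≠ 0) :
    -(-(B/A) * W * (2*u/B * F + (-(2*Complex.I)/(e*mu) - mu*(A/B)) * G))
      = (mu + 2*Complex.I/(e*mu) * (B/A)) * -(W*G) + 2*u/A * (W*F) := by
  ring_nf; field_simp; try ring

private lemma aux2 (A B e mu u F G W : ℂ) (hA : A ≠ 0) (hB : B ≠ 0) (he : e ≠ 0)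
    (hmu : mu ≠ 0) :
    -(B/A) * W * ((mu + -(2*Complex.I)/(e*mu) * (A/B)) * F + 2*u/B * G)
      = 2*u/A * -(W*G) + (2*Complex.I/(e*mu) - mu*(B/A)) * (W*F) := by
  ring_nf; field_simp; try ring

private lemma aux3 (mu R Q q r F G W : ℂ) (hmu : mu ≠ 0) :
    -(Complex.I/2*(mu^2 - (mu^2)⁻¹ + q - r)*W*G
        + W*(-(Complex.I)/2*((mu*R - mu⁻¹*Q)*F + (q - (mu^2)⁻¹)*G)))
      = Complex.I/2*((mu^2 - r) * -(W*G) + (mu*R - mu⁻¹*Q)*(W*F)) := by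
  ring_nf; try field_simp

private lemma aux4 (mu Rc Qc q r F G W : ℂ) (hmu : mu ≠ 0) :
    Complex.I/2*(mu^2 - (mu^2)⁻¹ + q - r)*W*F
        + W*(-(Complex.I)/2*((mu^2 - r)*F + (mu*Rc - mu⁻¹*Qc)*G))
      = Complex.I/2*((mu*Rc - mu⁻¹*Qc) * -(W*G) + (q - (mu^2)⁻¹)*(W*F)) := by
  ring_nf; try field_simp

set_option maxRecDepth 8000 in
theorem lax_symmetry_conj
    (h : ℝ) (hh : 0 < h) (lam1 : ℂ) (hlam1 : lam1 ≠ 0)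
    (U R Q : ℤ → ℝ → ℂ) (f g : ℤ → ℝ → ℂ)
    (hLax : IsLaxSolution h U R Q lam1 f g)
    (Ω : ℤ → ℝ → ℂ)
    (hΩdiff : ∀ (n : ℤ) (t : ℝ), DifferentiableAt ℝ (Ω n) t)
    (hΩrec : ∀ (n : ℤ) (t : ℝ), Ω (n + 1) t = -(mtmS h (U n t)) * Ω n t)
    (hΩode : ∀ (n : ℤ) (t : ℝ),
      deriv (Ω n) t = Complex.I / 2 * ((conj lam1) ^ 2 - ((conj lam1) ^ 2)⁻¹
        + (Complex.normSq (Q n t) : ℂ) - (Complex.normSq (R n t) : ℂ)) * Ω n t) :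
    IsLaxSolution h U R Q (conj lam1)
      (fun n t => -(Ω n t * conj (g n t)))
      (fun n t => Ω n t * conj (f n t)) := by
  obtain ⟨hfd, hgd, hfrec, hgrec, hfode, hgode⟩ := hLax
  have hc : (starRingEnd ℂ) lam1 ≠ 0 := by simpa using hlam1
  have hh' : (h : ℂ) ≠ 0 := Complex.ofReal_ne_zero.mpr hh.ne'
  refine ⟨?_, ?_, ?_, ?_, ?_, ?_⟩
  · intro n t
    exact ((hΩdiff n t).mul (conj_diff (hgd n t))).neg
  · intro n t
    exact (hΩdiff n t).mul (conj_diff (hfd n t))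
  · intro n t
    have hA := denom_ne h (Complex.normSq (U n t))
    have hB := denom_ne' h (Complex.normSq (U n t))
    simp only [hΩrec, hgrec, mtmS, map_add, map_mul, map_sub, map_div₀, map_one,
      Complex.conj_I, Complex.conj_ofReal, map_ofNat, Complex.conj_conj]
    linear_combination aux1 (1 - Complex.I / 2 * h * Complex.normSq (U n t))
      (1 + Complex.I / 2 * h * Complex.normSq (U n t)) (h : ℂ) (conj lam1)
      (U n t) (conj (f n t)) (conj (g n t)) (Ω n t) hA hB hh' hc
  · intro n t
    have hA := denom_ne h (Complex.normSq (U n t))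
    have hB := denom_ne' h (Complex.normSq (U n t))
    simp only [hΩrec, hfrec, mtmS, map_add, map_mul, map_sub, map_div₀, map_one,
      Complex.conj_I, Complex.conj_ofReal, map_ofNat, Complex.conj_conj]
    linear_combination aux2 (1 - Complex.I / 2 * h * Complex.normSq (U n t))
      (1 + Complex.I / 2 * h * Complex.normSq (U n t)) (h : ℂ) (conj lam1)
      (conj (U n t)) (conj (f n t)) (conj (g n t)) (Ω n t) hA hB hh' hc
  · intro n t
    have hd : deriv (fun s => -(Ω n s * (starRingEnd ℂ) (g n s))) t
        = -(deriv (Ω n) t * (starRingEnd ℂ) (g n t)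
            + Ω n t * (starRingEnd ℂ) (deriv (g n) t)) := by
      rw [deriv.fun_neg, deriv_fun_mul (hΩdiff n t) (conj_diff (hgd n t)), conj_deriv (hgd n t)]
    rw [hd, hΩode, hgode]
    simp only [map_add, map_mul, map_sub, map_div₀, map_one, Complex.conj_I,
      Complex.conj_ofReal, map_ofNat, map_inv₀, map_pow, Complex.conj_conj]
    linear_combination aux3 (conj lam1) (R n t) (Q n t) (Complex.normSq (Q n t))
      (Complex.normSq (R n t)) (conj (f n t)) (conj (g n t)) (Ω n t) hc
  · intro n t
    have hd : deriv (fun s => Ω n s * (starRingEnd ℂ) (f n s)) t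
        = deriv (Ω n) t * (starRingEnd ℂ) (f n t)
            + Ω n t * (starRingEnd ℂ) (deriv (f n) t) := by
      rw [deriv_fun_mul (hΩdiff n t) (conj_diff (hfd n t)), conj_deriv (hfd n t)]
    rw [hd, hΩode, hfode]
    simp only [map_add, map_mul, map_sub, map_div₀, map_one, Complex.conj_I,
      Complex.conj_ofReal, map_ofNat, map_inv₀, map_pow, Complex.conj_conj]
    linear_combination aux4 (conj lam1) (conj (R n t)) (conj (Q n t))
      (Complex.normSq (Q n t)) (Complex.normSq (R n t)) (conj (f n t)) (conj (g n t))
      (Ω n t) hc
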